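/- The cross-ratio datum T = ((1,2,3,5),(1,2,4,6),(1,2,7,8),(3,4,5,7),(3,4,6,8)) on 8 points has cross-ratio degree exactly 3: there exists a nonzero polynomial q ∈ ℂ[x₁,…,x₅] such that for every (a₁,…,a₅) ∈ (ℂ∖{0,1})⁵ with q(a₁,…,a₅) ≠ 0, the set of tuples (p₁,…,p₈) of pairwise distinct points of ℙ¹(ℂ) with p₁ = ∞, p₂ = 0, p₃ = 1 satisfying CR(p₁,p₂,p₃,p₅)=a₁, CR(p₁,p₂,p₄,p₆)=a₂, CR(p₁,p₂,p₇,p₈)=a₃, CR(p₃,p₄,p₅,p₇)=a₄, CR(p₃,p₄,p₆,p₈)=a₅ has exactly 3 elements. -/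

import Mathlib

open OnePoint

/-- Cross-ratio of four points of `ℙ¹(ℂ) = OnePoint ℂ`:
`CR(z₁,z₂,z₃,z₄) = ((z₃−z₁)(z₄−z₂))/((z₃−z₂)(z₄−z₁))` when all points are finite,
extended to one point at infinity by omitting the two factors containing it. -/
noncomputable def CR : OnePoint ℂ → OnePoint ℂ → OnePoint ℂ → OnePoint ℂ → ℂ
  | Option.none,    Option.some z₂, Option.some z₃, Option.some z₄ => (z₄ - z₂) / (z₃ - z₂)
  | Option.some z₁, Option.none,    Option.some z₃, Option.some z₄ => (z₃ - z₁) / (z₄ - z₁)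
  | Option.some z₁, Option.some z₂, Option.none,    Option.some z₄ => (z₄ - z₂) / (z₄ - z₁)
  | Option.some z₁, Option.some z₂, Option.some z₃, Option.none    => (z₃ - z₁) / (z₃ - z₂)
  | Option.some z₁, Option.some z₂, Option.some z₃, Option.some z₄ =>
      ((z₃ - z₁) * (z₄ - z₂)) / ((z₃ - z₂) * (z₄ - z₁))
  | _, _, _, _ => 0

/-! ### Auxiliary material -/

section Aux

lemma CR_inf (z2 z3 z4 : ℂ) :
    CR ∞ (z2 : OnePoint ℂ) (z3 : OnePoint ℂ) (z4 : OnePoint ℂ) = (z4 - z2) / (z3 - z2) := rfl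

lemma CR_fin (z1 z2 z3 z4 : ℂ) :
    CR (z1 : OnePoint ℂ) (z2 : OnePoint ℂ) (z3 : OnePoint ℂ) (z4 : OnePoint ℂ)
      = ((z3 - z1) * (z4 - z2)) / ((z3 - z2) * (z4 - z1)) := rfl

variable {R : Type*} [CommRing R]

/-- resultant of a cubic and a linear polynomial -/
def glin (c0 c1 c2 c3 b0 b1 : R) : R :=
  -(c3*b0^3) + c2*b0^2*b1 - c1*b0*b1^2 + c0*b1^3

/-- resultant of a cubic and a quadratic polynomial -/
def gquad (c0 c1 c2 c3 b0 b1 b2 : R) : R :=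
  c3^2*b0^3*b2^2 - c2*c3*b0^2*b1*b2^2 + c2^2*b0^2*b2^3 + c1*c3*b0*b1^2*b2^2
    - 2*c1*c3*b0^2*b2^3 - c1*c2*b0*b1*b2^3 + c1^2*b0*b2^4 - c0*c3*b1^3*b2^2
    + 3*c0*c3*b0*b1*b2^3 + c0*c2*b1^2*b2^3 - 2*c0*c2*b0*b2^4 - c0*c1*b1*b2^4 + c0^2*b2^5

/-- (a multiple of) the discriminant of a cubic -/
def gdisc (c0 c1 c2 c3 : R) : R :=
  -9*c1^2*c2^2*c3^3 + 36*c1^3*c3^4 + 36*c0*c2^3*c3^3 - 162*c0*c1*c2*c3^4 + 243*c0^2*c3^5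

/-- coefficients of the elimination cubic for our cross-ratio system -/
def qc0 (A0 A1 A2 A3 A4 : R) : R := A0*A2*A3
def qc1 (A0 A1 A2 A3 A4 : R) : R :=
  A0 - 1 + A2 + A4 - A2*A3 - A1*A4 - A0*A4 - A0*A3 + A0*A3*A4 - A0*A2
    - A0*A2*A3*A4 + A0*A1*A4 - A0*A1*A3*A4 - A0*A1*A2*A3 + A0*A1*A2*A3*A4
def qc2 (A0 A1 A2 A3 A4 : R) : R :=
  A3 + A1 - A3*A4 - A2*A4 + A2*A3*A4 + A1*A3*A4 - A1*A2 + A1*A2*A4 + A1*A2*A3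
    - A1*A2*A3*A4 + A0*A2*A4 - A0*A1 + A0*A1*A3 + A0*A1*A2 - A0*A1*A2*A4
def qc3 (A0 A1 A2 A3 A4 : R) : R := -(A1*A3)

lemma elimLin (c0 c1 c2 c3 b0 b1 x : ℂ)
    (hP : c3*x^3 + c2*x^2 + c1*x + c0 = 0) (hB : b1*x + b0 = 0) :
    glin c0 c1 c2 c3 b0 b1 = 0 := by
  unfold glin
  linear_combination (b1^3) * hP +
    (-(c3*b1^2)*x^2 + c3*b0*b1*x - c3*b0^2 - c2*b1^2*x + c2*b0*b1 - c1*b1^2) * hB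

lemma elimQuad (c0 c1 c2 c3 b0 b1 b2 x : ℂ)
    (hP : c3*x^3 + c2*x^2 + c1*x + c0 = 0) (hB : b2*x^2 + b1*x + b0 = 0) :
    gquad c0 c1 c2 c3 b0 b1 b2 = 0 := by
  unfold gquad
  linear_combination
    (-(c3*b1^2*b2^3)*x - c3*b1^3*b2^2 + c3*b0*b2^4*x + 2*c3*b0*b1*b2^3 + c2*b1*b2^4*x
      + c2*b1^2*b2^3 - c2*b0*b2^4 - c1*b2^5*x - c1*b1*b2^4 + c0*b2^5) * hP +
    (c3^2*b1^2*b2^2*x^2 - c3^2*b0*b2^3*x^2 - c3^2*b0*b1*b2^2*x + c3^2*b0^2*b2^2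
      - c2*c3*b1*b2^3*x^2 + c2*c3*b1^2*b2^2*x - c2*c3*b0*b1*b2^2 - c2^2*b1*b2^3*x
      + c2^2*b0*b2^3 + c1*c3*b2^4*x^2 + c1*c3*b1^2*b2^2 - 2*c1*c3*b0*b2^3 + c1*c2*b2^4*x
      - c1*c2*b1*b2^3 + c1^2*b2^4 - c0*c3*b2^4*x + c0*c3*b1*b2^3 - c0*c2*b2^4) * hB

open Polynomial in
lemma cubic_roots (c0 c1 c2 c3 : ℂ) (h3 : c3 ≠ 0) (hG : gdisc c0 c1 c2 c3 ≠ 0) :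
    ∃ s : Finset ℂ, s.card = 3 ∧ ∀ z : ℂ, z ∈ s ↔ c3*z^3 + c2*z^2 + c1*z + c0 = 0 := by
  set p : ℂ[X] := C c3 * X^3 + C c2 * X^2 + C c1 * X + C c0 with hp
  have hd : p.natDegree = 3 := by rw [hp]; compute_degree!
  have hp0 : p ≠ 0 := fun h => by simp [h] at hd
  have hder : derivative p = C (3*c3) * X^2 + C (2*c2) * X + C c1 := by
    rw [hp]; simp [derivative_C_mul, derivative_X_pow]; simp only [C_mul, map_ofNat]; ring
  have hsep : p.Separable := by
    rw [Polynomial.Separable, hder]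
    refine ⟨C (gdisc c0 c1 c2 c3)⁻¹ * (C (54*c2^2*c3^4 - 162*c1*c3^5) * X
        + C (36*c2^3*c3^3 - 135*c1*c2*c3^4 + 243*c0*c3^5)),
      C (gdisc c0 c1 c2 c3)⁻¹ * (C (-18*c2^2*c3^4 + 54*c1*c3^5) * X^2
        + C (-18*c2^3*c3^3 + 63*c1*c2*c3^4 - 81*c0*c3^5) * X
        + C (-9*c1*c2^2*c3^3 + 36*c1^2*c3^4 - 27*c0*c2*c3^4)), ?_⟩
    apply Polynomial.funext
    intro z
    simp only [hp, eval_add, eval_mul, eval_pow, eval_C, eval_X, eval_one]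
    have key : ((54*c2^2*c3^4 - 162*c1*c3^5)*z + (36*c2^3*c3^3 - 135*c1*c2*c3^4 + 243*c0*c3^5))
          * (c3*z^3 + c2*z^2 + c1*z + c0)
        + ((-18*c2^2*c3^4 + 54*c1*c3^5)*z^2 + (-18*c2^3*c3^3 + 63*c1*c2*c3^4 - 81*c0*c3^5)*z
          + (-9*c1*c2^2*c3^3 + 36*c1^2*c3^4 - 27*c0*c2*c3^4)) * (3*c3*z^2 + 2*c2*z + c1)
        = gdisc c0 c1 c2 c3 := by unfold gdisc; ring
    field_simp
    linear_combination key
  have hsplit : p.Splits := IsAlgClosed.splits p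
  have hcard : Multiset.card p.roots = 3 := by
    rw [← hd]; exact (splits_iff_card_roots.mp hsplit)
  have hnodup : p.roots.Nodup := Polynomial.nodup_roots hsep
  refine ⟨p.roots.toFinset, ?_, ?_⟩
  · rw [Multiset.toFinset_card_of_nodup hnodup, hcard]
  · intro z
    rw [Multiset.mem_toFinset, mem_roots', hp]
    simp only [eval_add, eval_mul, eval_pow, eval_C, eval_X, IsRoot.def]
    constructor
    · rintro ⟨-, h⟩; linear_combination h
    · intro h; exact ⟨hp0, by linear_combination h⟩

open scoped Classical in
/-- tag function used to verify injectivity of the configuration map -/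
noncomputable def tag (w1 w2 w3 w4 w5 w6 w7 : ℂ) : OnePoint ℂ → Fin 8 := fun w =>
  if w = ∞ then 0 else if w = (w1 : OnePoint ℂ) then 1 else if w = (w2 : OnePoint ℂ) then 2
    else if w = (w3 : OnePoint ℂ) then 3 else if w = (w4 : OnePoint ℂ) then 4
    else if w = (w5 : OnePoint ℂ) then 5 else if w = (w6 : OnePoint ℂ) then 6 else 7

lemma ne_coe_of_ne {x y : ℂ} (h : x ≠ y) : (x : OnePoint ℂ) ≠ (y : OnePoint ℂ) :=
  fun hh => h (OnePoint.coe_eq_coe.mp hh)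

lemma inj8 (w1 w2 w3 w4 w5 w6 w7 : ℂ)
    (h12 : w1 ≠ w2) (h13 : w1 ≠ w3) (h14 : w1 ≠ w4) (h15 : w1 ≠ w5) (h16 : w1 ≠ w6)
    (h17 : w1 ≠ w7) (h23 : w2 ≠ w3) (h24 : w2 ≠ w4) (h25 : w2 ≠ w5) (h26 : w2 ≠ w6)
    (h27 : w2 ≠ w7) (h34 : w3 ≠ w4) (h35 : w3 ≠ w5) (h36 : w3 ≠ w6) (h37 : w3 ≠ w7)
    (h45 : w4 ≠ w5) (h46 : w4 ≠ w6) (h47 : w4 ≠ w7) (h56 : w5 ≠ w6) (h57 : w5 ≠ w7)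
    (h67 : w6 ≠ w7) :
    Function.Injective
      (![∞, (w1 : OnePoint ℂ), w2, w3, w4, w5, w6, w7] : Fin 8 → OnePoint ℂ) := by
  have key : ∀ i : Fin 8,
      tag w1 w2 w3 w4 w5 w6 w7 ((![∞, (w1 : OnePoint ℂ), w2, w3, w4, w5, w6, w7]) i) = i := by
    intro i
    fin_cases i
    · show tag w1 w2 w3 w4 w5 w6 w7 ∞ = 0
      rw [tag, if_pos rfl]
    · show tag w1 w2 w3 w4 w5 w6 w7 (w1 : OnePoint ℂ) = 1
      rw [tag, if_neg (OnePoint.coe_ne_infty w1), if_pos rfl]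
    · show tag w1 w2 w3 w4 w5 w6 w7 (w2 : OnePoint ℂ) = 2
      rw [tag, if_neg (OnePoint.coe_ne_infty w2), if_neg (ne_coe_of_ne h12.symm), if_pos rfl]
    · show tag w1 w2 w3 w4 w5 w6 w7 (w3 : OnePoint ℂ) = 3
      rw [tag, if_neg (OnePoint.coe_ne_infty w3), if_neg (ne_coe_of_ne h13.symm),
        if_neg (ne_coe_of_ne h23.symm), if_pos rfl]
    · show tag w1 w2 w3 w4 w5 w6 w7 (w4 : OnePoint ℂ) = 4
      rw [tag, if_neg (OnePoint.coe_ne_infty w4), if_neg (ne_coe_of_ne h14.symm),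
        if_neg (ne_coe_of_ne h24.symm), if_neg (ne_coe_of_ne h34.symm), if_pos rfl]
    · show tag w1 w2 w3 w4 w5 w6 w7 (w5 : OnePoint ℂ) = 5
      rw [tag, if_neg (OnePoint.coe_ne_infty w5), if_neg (ne_coe_of_ne h15.symm),
        if_neg (ne_coe_of_ne h25.symm), if_neg (ne_coe_of_ne h35.symm),
        if_neg (ne_coe_of_ne h45.symm), if_pos rfl]
    · show tag w1 w2 w3 w4 w5 w6 w7 (w6 : OnePoint ℂ) = 6
      rw [tag, if_neg (OnePoint.coe_ne_infty w6), if_neg (ne_coe_of_ne h16.symm),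
        if_neg (ne_coe_of_ne h26.symm), if_neg (ne_coe_of_ne h36.symm),
        if_neg (ne_coe_of_ne h46.symm), if_neg (ne_coe_of_ne h56.symm), if_pos rfl]
    · show tag w1 w2 w3 w4 w5 w6 w7 (w7 : OnePoint ℂ) = 7
      rw [tag, if_neg (OnePoint.coe_ne_infty w7), if_neg (ne_coe_of_ne h17.symm),
        if_neg (ne_coe_of_ne h27.symm), if_neg (ne_coe_of_ne h37.symm),
        if_neg (ne_coe_of_ne h47.symm), if_neg (ne_coe_of_ne h57.symm),
        if_neg (ne_coe_of_ne h67.symm)]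
  intro i j h
  rw [← key i, ← key j, h]


section MapLemmas
variable {R S : Type*} [CommRing R] [CommRing S] (f : R →+* S)

lemma map_glin (c0 c1 c2 c3 b0 b1 : R) :
    f (glin c0 c1 c2 c3 b0 b1) = glin (f c0) (f c1) (f c2) (f c3) (f b0) (f b1) := by
  simp [glin]
lemma map_gquad (c0 c1 c2 c3 b0 b1 b2 : R) :
    f (gquad c0 c1 c2 c3 b0 b1 b2) = gquad (f c0) (f c1) (f c2) (f c3) (f b0) (f b1) (f b2) := by
  simp only [gquad, map_ofNat, map_mul, map_add, map_sub, map_neg, map_pow]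
lemma map_gdisc (c0 c1 c2 c3 : R) :
    f (gdisc c0 c1 c2 c3) = gdisc (f c0) (f c1) (f c2) (f c3) := by
  simp only [gdisc, map_ofNat, map_mul, map_add, map_sub, map_neg, map_pow]
lemma map_qc0 (A0 A1 A2 A3 A4 : R) :
    f (qc0 A0 A1 A2 A3 A4) = qc0 (f A0) (f A1) (f A2) (f A3) (f A4) := by simp [qc0]
lemma map_qc1 (A0 A1 A2 A3 A4 : R) :
    f (qc1 A0 A1 A2 A3 A4) = qc1 (f A0) (f A1) (f A2) (f A3) (f A4) := by simp only [qc1, map_mul, map_add, map_sub, map_one]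
lemma map_qc2 (A0 A1 A2 A3 A4 : R) :
    f (qc2 A0 A1 A2 A3 A4) = qc2 (f A0) (f A1) (f A2) (f A3) (f A4) := by simp only [qc2, map_mul, map_add, map_sub]
lemma map_qc3 (A0 A1 A2 A3 A4 : R) :
    f (qc3 A0 A1 A2 A3 A4) = qc3 (f A0) (f A1) (f A2) (f A3) (f A4) := by simp [qc3]

end MapLemmas

set_option maxHeartbeats 1000000 in
open MvPolynomial in
/-- the generic-condition polynomial -/
noncomputable def qpoly : MvPolynomial (Fin 5) ℂ :=
  gdisc (qc0 (X 0) (X 1) (X 2) (X 3) (X 4)) (qc1 (X 0) (X 1) (X 2) (X 3) (X 4))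
      (qc2 (X 0) (X 1) (X 2) (X 3) (X 4)) (qc3 (X 0) (X 1) (X 2) (X 3) (X 4)) *
    glin (qc0 (X 0) (X 1) (X 2) (X 3) (X 4)) (qc1 (X 0) (X 1) (X 2) (X 3) (X 4))
      (qc2 (X 0) (X 1) (X 2) (X 3) (X 4)) (qc3 (X 0) (X 1) (X 2) (X 3) (X 4))
      (X 0 - 1 - X 3 * X 0) (X 3) *
    glin (qc0 (X 0) (X 1) (X 2) (X 3) (X 4)) (qc1 (X 0) (X 1) (X 2) (X 3) (X 4))
      (qc2 (X 0) (X 1) (X 2) (X 3) (X 4)) (qc3 (X 0) (X 1) (X 2) (X 3) (X 4))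
      (-(X 3 * X 0)) (X 0 - 1 + X 3) *
    glin (qc0 (X 0) (X 1) (X 2) (X 3) (X 4)) (qc1 (X 0) (X 1) (X 2) (X 3) (X 4))
      (qc2 (X 0) (X 1) (X 2) (X 3) (X 4)) (qc3 (X 0) (X 1) (X 2) (X 3) (X 4)) (-1) 1 *
    glin (qc0 (X 0) (X 1) (X 2) (X 3) (X 4)) (qc1 (X 0) (X 1) (X 2) (X 3) (X 4))
      (qc2 (X 0) (X 1) (X 2) (X 3) (X 4)) (qc3 (X 0) (X 1) (X 2) (X 3) (X 4)) (-(X 0)) 1 *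
    glin (qc0 (X 0) (X 1) (X 2) (X 3) (X 4)) (qc1 (X 0) (X 1) (X 2) (X 3) (X 4))
      (qc2 (X 0) (X 1) (X 2) (X 3) (X 4)) (qc3 (X 0) (X 1) (X 2) (X 3) (X 4)) (-1) (X 1) *
    glin (qc0 (X 0) (X 1) (X 2) (X 3) (X 4)) (qc1 (X 0) (X 1) (X 2) (X 3) (X 4))
      (qc2 (X 0) (X 1) (X 2) (X 3) (X 4)) (qc3 (X 0) (X 1) (X 2) (X 3) (X 4)) (-(X 0)) (X 1) *
    glin (qc0 (X 0) (X 1) (X 2) (X 3) (X 4)) (qc1 (X 0) (X 1) (X 2) (X 3) (X 4))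
      (qc2 (X 0) (X 1) (X 2) (X 3) (X 4)) (qc3 (X 0) (X 1) (X 2) (X 3) (X 4))
      (X 0 - X 0 * X 2 * X 3 - X 0^2 + X 0^2 * X 3) (X 0 * X 2 - X 2 + X 2 * X 3 - X 0 * X 3) *
    gquad (qc0 (X 0) (X 1) (X 2) (X 3) (X 4)) (qc1 (X 0) (X 1) (X 2) (X 3) (X 4))
      (qc2 (X 0) (X 1) (X 2) (X 3) (X 4)) (qc3 (X 0) (X 1) (X 2) (X 3) (X 4))
      (-(X 0 * X 3)) (X 0 + X 1 + X 3 - 1 - X 0 * X 1 + X 0 * X 1 * X 3) (-(X 1 * X 3)) *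
    gquad (qc0 (X 0) (X 1) (X 2) (X 3) (X 4)) (qc1 (X 0) (X 1) (X 2) (X 3) (X 4))
      (qc2 (X 0) (X 1) (X 2) (X 3) (X 4)) (qc3 (X 0) (X 1) (X 2) (X 3) (X 4))
      (-(X 0 * X 2 * X 3)) (X 1 - X 2 + X 2 * X 3 + X 0 * X 2 - X 0 * X 1 + X 0 * X 1 * X 3)
      (-(X 1 * X 3))

lemma qpoly_eval (b : Fin 5 → ℂ) : MvPolynomial.eval b qpoly =
  gdisc (qc0 (b 0) (b 1) (b 2) (b 3) (b 4)) (qc1 (b 0) (b 1) (b 2) (b 3) (b 4))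
      (qc2 (b 0) (b 1) (b 2) (b 3) (b 4)) (qc3 (b 0) (b 1) (b 2) (b 3) (b 4)) *
    glin (qc0 (b 0) (b 1) (b 2) (b 3) (b 4)) (qc1 (b 0) (b 1) (b 2) (b 3) (b 4))
      (qc2 (b 0) (b 1) (b 2) (b 3) (b 4)) (qc3 (b 0) (b 1) (b 2) (b 3) (b 4))
      (b 0 - 1 - b 3 * b 0) (b 3) *
    glin (qc0 (b 0) (b 1) (b 2) (b 3) (b 4)) (qc1 (b 0) (b 1) (b 2) (b 3) (b 4))
      (qc2 (b 0) (b 1) (b 2) (b 3) (b 4)) (qc3 (b 0) (b 1) (b 2) (b 3) (b 4))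
      (-(b 3 * b 0)) (b 0 - 1 + b 3) *
    glin (qc0 (b 0) (b 1) (b 2) (b 3) (b 4)) (qc1 (b 0) (b 1) (b 2) (b 3) (b 4))
      (qc2 (b 0) (b 1) (b 2) (b 3) (b 4)) (qc3 (b 0) (b 1) (b 2) (b 3) (b 4)) (-1) 1 *
    glin (qc0 (b 0) (b 1) (b 2) (b 3) (b 4)) (qc1 (b 0) (b 1) (b 2) (b 3) (b 4))
      (qc2 (b 0) (b 1) (b 2) (b 3) (b 4)) (qc3 (b 0) (b 1) (b 2) (b 3) (b 4)) (-(b 0)) 1 *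
    glin (qc0 (b 0) (b 1) (b 2) (b 3) (b 4)) (qc1 (b 0) (b 1) (b 2) (b 3) (b 4))
      (qc2 (b 0) (b 1) (b 2) (b 3) (b 4)) (qc3 (b 0) (b 1) (b 2) (b 3) (b 4)) (-1) (b 1) *
    glin (qc0 (b 0) (b 1) (b 2) (b 3) (b 4)) (qc1 (b 0) (b 1) (b 2) (b 3) (b 4))
      (qc2 (b 0) (b 1) (b 2) (b 3) (b 4)) (qc3 (b 0) (b 1) (b 2) (b 3) (b 4)) (-(b 0)) (b 1) *
    glin (qc0 (b 0) (b 1) (b 2) (b 3) (b 4)) (qc1 (b 0) (b 1) (b 2) (b 3) (b 4))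
      (qc2 (b 0) (b 1) (b 2) (b 3) (b 4)) (qc3 (b 0) (b 1) (b 2) (b 3) (b 4))
      (b 0 - b 0 * b 2 * b 3 - b 0^2 + b 0^2 * b 3) (b 0 * b 2 - b 2 + b 2 * b 3 - b 0 * b 3) *
    gquad (qc0 (b 0) (b 1) (b 2) (b 3) (b 4)) (qc1 (b 0) (b 1) (b 2) (b 3) (b 4))
      (qc2 (b 0) (b 1) (b 2) (b 3) (b 4)) (qc3 (b 0) (b 1) (b 2) (b 3) (b 4))
      (-(b 0 * b 3)) (b 0 + b 1 + b 3 - 1 - b 0 * b 1 + b 0 * b 1 * b 3) (-(b 1 * b 3)) *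
    gquad (qc0 (b 0) (b 1) (b 2) (b 3) (b 4)) (qc1 (b 0) (b 1) (b 2) (b 3) (b 4))
      (qc2 (b 0) (b 1) (b 2) (b 3) (b 4)) (qc3 (b 0) (b 1) (b 2) (b 3) (b 4))
      (-(b 0 * b 2 * b 3)) (b 1 - b 2 + b 2 * b 3 + b 0 * b 2 - b 0 * b 1 + b 0 * b 1 * b 3)
      (-(b 1 * b 3)) := by
  rw [qpoly]
  simp only [map_mul, map_glin, map_gquad, map_gdisc, map_qc0, map_qc1, map_qc2, map_qc3,
    map_sub, map_add, map_neg, map_one, map_pow, MvPolynomial.eval_X]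

end Aux

set_option maxHeartbeats 4000000 in
theorem crossRatioDegree_eq_three_T2 :
    ∃ q : MvPolynomial (Fin 5) ℂ, q ≠ 0 ∧
      ∀ a : Fin 5 → ℂ, (∀ i, a i ≠ 0 ∧ a i ≠ 1) → MvPolynomial.eval a q ≠ 0 →
        let S : Set (Fin 8 → OnePoint ℂ) :=
          {p | Function.Injective p ∧ p 0 = ∞ ∧ p 1 = ((0 : ℂ) : OnePoint ℂ) ∧
            p 2 = ((1 : ℂ) : OnePoint ℂ) ∧
            CR (p 0) (p 1) (p 2) (p 4) = a 0 ∧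
            CR (p 0) (p 1) (p 3) (p 5) = a 1 ∧
            CR (p 0) (p 1) (p 6) (p 7) = a 2 ∧
            CR (p 2) (p 3) (p 4) (p 6) = a 3 ∧
            CR (p 2) (p 3) (p 5) (p 7) = a 4}
        S.Finite ∧ S.ncard = 3 := by
  refine ⟨qpoly, ?_, ?_⟩
  · intro h0
    have h := qpoly_eval (![(6:ℂ), 20, 4, 10, 5])
    rw [h0, map_zero] at h
    have hb0 : (![(6:ℂ), 20, 4, 10, 5]) 0 = 6 := rfl
    have hb1 : (![(6:ℂ), 20, 4, 10, 5]) 1 = 20 := rfl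
    have hb2 : (![(6:ℂ), 20, 4, 10, 5]) 2 = 4 := rfl
    have hb3 : (![(6:ℂ), 20, 4, 10, 5]) 3 = 10 := rfl
    have hb4 : (![(6:ℂ), 20, 4, 10, 5]) 4 = 5 := rfl
    rw [hb0, hb1, hb2, hb3, hb4] at h
    norm_num [glin, gquad, gdisc, qc0, qc1, qc2, qc3] at h
  · intro a ha hq
    obtain ⟨ha00, ha01⟩ := ha 0
    obtain ⟨ha10, ha11⟩ := ha 1
    obtain ⟨ha20, ha21⟩ := ha 2
    obtain ⟨ha30, ha31⟩ := ha 3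
    obtain ⟨ha40, ha41⟩ := ha 4
    rw [qpoly_eval a] at hq
    simp only [mul_ne_zero_iff] at hq
    obtain ⟨⟨⟨⟨⟨⟨⟨⟨⟨hfdisc, hfD⟩, hfN⟩, hfx1⟩, hfxa0⟩, hfza1⟩, hfzy⟩, hfvy⟩, hfuz⟩, hfvz⟩ := hq
    have h3 : qc3 (a 0) (a 1) (a 2) (a 3) (a 4) ≠ 0 := by
      simp only [qc3]; exact neg_ne_zero.mpr (mul_ne_zero ha10 ha30)
    obtain ⟨s, hscard, hsmem⟩ := cubic_roots _ _ _ _ h3 hfdisc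
    have hDne : ∀ x : ℂ, qc3 (a 0) (a 1) (a 2) (a 3) (a 4) * x ^ 3
        + qc2 (a 0) (a 1) (a 2) (a 3) (a 4) * x ^ 2 + qc1 (a 0) (a 1) (a 2) (a 3) (a 4) * x
        + qc0 (a 0) (a 1) (a 2) (a 3) (a 4) = 0 → a 3 * x + (a 0 - 1 - a 3 * a 0) ≠ 0 :=
      fun x hx h => hfD (elimLin _ _ _ _ _ _ x hx h)
    set F : ℂ → (Fin 8 → OnePoint ℂ) := fun x =>
      ![∞, ((0:ℂ) : OnePoint ℂ), ((1:ℂ) : OnePoint ℂ), (x : OnePoint ℂ),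
        ((a 0 : ℂ) : OnePoint ℂ), ((a 1 * x : ℂ) : OnePoint ℂ),
        ((((a 0 - 1 + a 3) * x - a 3 * a 0) / (a 3 * x + (a 0 - 1 - a 3 * a 0)) : ℂ) : OnePoint ℂ),
        ((a 2 * (((a 0 - 1 + a 3) * x - a 3 * a 0) / (a 3 * x + (a 0 - 1 - a 3 * a 0))) : ℂ) :
          OnePoint ℂ)] with hF
    have hSeq : {p : Fin 8 → OnePoint ℂ | Function.Injective p ∧ p 0 = ∞ ∧
        p 1 = ((0 : ℂ) : OnePoint ℂ) ∧ p 2 = ((1 : ℂ) : OnePoint ℂ) ∧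
        CR (p 0) (p 1) (p 2) (p 4) = a 0 ∧
        CR (p 0) (p 1) (p 3) (p 5) = a 1 ∧
        CR (p 0) (p 1) (p 6) (p 7) = a 2 ∧
        CR (p 2) (p 3) (p 4) (p 6) = a 3 ∧
        CR (p 2) (p 3) (p 5) (p 7) = a 4} = F '' ↑s := by
      ext p
      simp only [Set.mem_setOf_eq, Set.mem_image, Finset.mem_coe]
      constructor
      · rintro ⟨hinj, h0, h1, h2, e1, e2, e3, e4, e5⟩
        have hne : ∀ i j : Fin 8, i ≠ j → p i ≠ p j := fun i j hij h => hij (hinj h)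
        have hfin : ∀ i : Fin 8, i ≠ 0 → p i ≠ ∞ := fun i hi h => hi (hinj (h.trans h0.symm))
        obtain ⟨x, hx3⟩ : ∃ x : ℂ, p 3 = (x : OnePoint ℂ) := by
          rcases hp : p 3 with _ | x
          · exact absurd hp (hfin 3 (by decide))
          · exact ⟨x, rfl⟩
        obtain ⟨y, hy4⟩ : ∃ y : ℂ, p 4 = (y : OnePoint ℂ) := by
          rcases hp : p 4 with _ | y
          · exact absurd hp (hfin 4 (by decide))
          · exact ⟨y, rfl⟩
        obtain ⟨z, hz5⟩ : ∃ z : ℂ, p 5 = (z : OnePoint ℂ) := by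
          rcases hp : p 5 with _ | z
          · exact absurd hp (hfin 5 (by decide))
          · exact ⟨z, rfl⟩
        obtain ⟨u, hu6⟩ : ∃ u : ℂ, p 6 = (u : OnePoint ℂ) := by
          rcases hp : p 6 with _ | u
          · exact absurd hp (hfin 6 (by decide))
          · exact ⟨u, rfl⟩
        obtain ⟨v, hv7⟩ : ∃ v : ℂ, p 7 = (v : OnePoint ℂ) := by
          rcases hp : p 7 with _ | v
          · exact absurd hp (hfin 7 (by decide))
          · exact ⟨v, rfl⟩
        rw [h0, h1, h2, hy4, CR_inf] at e1
        have hy : y = a 0 := by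
          rw [div_eq_iff (by norm_num : (1:ℂ) - 0 ≠ 0)] at e1
          linear_combination e1
        rw [h0, h1, hx3, hz5, CR_inf] at e2
        have hxne0 : x ≠ 0 := fun h => hne 3 1 (by decide) (by rw [hx3, h1, h])
        have hz : z = a 1 * x := by
          rw [div_eq_iff (by simpa using hxne0)] at e2
          linear_combination e2
        rw [h0, h1, hu6, hv7, CR_inf] at e3
        have hune0 : u ≠ 0 := fun h => hne 6 1 (by decide) (by rw [hu6, h1, h])
        have hv : v = a 2 * u := by
          rw [div_eq_iff (by simpa using hune0)] at e3
          linear_combination e3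
        rw [h2, hx3, hy4, hu6, CR_fin] at e4
        have hyx : y - x ≠ 0 := sub_ne_zero.mpr (fun h => hne 4 3 (by decide) (by rw [hy4, hx3, h]))
        have hu1' : u - 1 ≠ 0 := sub_ne_zero.mpr (fun h => hne 6 2 (by decide) (by rw [hu6, h2, h]))
        rw [div_eq_iff (mul_ne_zero hyx hu1')] at e4
        rw [h2, hx3, hz5, hv7, CR_fin] at e5
        have hzx' : z - x ≠ 0 := sub_ne_zero.mpr (fun h => hne 5 3 (by decide) (by rw [hz5, hx3, h]))
        have hv1' : v - 1 ≠ 0 := sub_ne_zero.mpr (fun h => hne 7 2 (by decide) (by rw [hv7, h2, h]))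
        rw [div_eq_iff (mul_ne_zero hzx' hv1')] at e5
        subst hy
        subst hz
        subst hv
        have huD : u * (a 3 * x + (a 0 - 1 - a 3 * a 0)) = ((a 0 - 1 + a 3) * x - a 3 * a 0) := by linear_combination e4
        have hxroot : qc3 (a 0) (a 1) (a 2) (a 3) (a 4) * x ^ 3
            + qc2 (a 0) (a 1) (a 2) (a 3) (a 4) * x ^ 2 + qc1 (a 0) (a 1) (a 2) (a 3) (a 4) * x
            + qc0 (a 0) (a 1) (a 2) (a 3) (a 4) = 0 := by
          simp only [qc0, qc1, qc2, qc3]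
          linear_combination (a 3 * x + (a 0 - 1 - a 3 * a 0)) * e5 - a 2 * ((a 1 * x - 1) - a 4 * x * (a 1 - 1)) * huD
        have hD : (a 3 * x + (a 0 - 1 - a 3 * a 0)) ≠ 0 := hDne x hxroot
        have hu_eq : ((a 0 - 1 + a 3) * x - a 3 * a 0) / (a 3 * x + (a 0 - 1 - a 3 * a 0)) = u := (div_eq_iff hD).mpr (by linear_combination -huD)
        refine ⟨x, (hsmem x).mpr hxroot, ?_⟩
        funext i
        fin_cases i
        · show (∞ : OnePoint ℂ) = p 0; exact h0.symm
        · show ((0:ℂ) : OnePoint ℂ) = p 1; exact h1.symm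
        · show ((1:ℂ) : OnePoint ℂ) = p 2; exact h2.symm
        · show (x : OnePoint ℂ) = p 3; exact hx3.symm
        · show ((a 0 : ℂ) : OnePoint ℂ) = p 4; exact hy4.symm
        · show ((a 1 * x : ℂ) : OnePoint ℂ) = p 5; exact hz5.symm
        · show ((((a 0 - 1 + a 3) * x - a 3 * a 0) / (a 3 * x + (a 0 - 1 - a 3 * a 0)) : ℂ) : OnePoint ℂ) = p 6
          rw [hu_eq, hu6]
        · show ((a 2 * (((a 0 - 1 + a 3) * x - a 3 * a 0) / (a 3 * x + (a 0 - 1 - a 3 * a 0))) : ℂ) : OnePoint ℂ) = p 7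
          rw [hu_eq, hv7]
      · rintro ⟨x, hxs, rfl⟩
        have hxq := (hsmem x).mp hxs
        have hx' := hxq
        simp only [qc0, qc1, qc2, qc3] at hx'
        have hx0 : x ≠ 0 := by
          intro h
          subst h
          have h023 : a 0 * a 2 * a 3 = 0 := by linear_combination hx'
          rcases mul_eq_zero.mp h023 with h' | h'
          · rcases mul_eq_zero.mp h' with h'' | h''
            · exact ha00 h''
            · exact ha20 h''
          · exact ha30 h'
        have hx1 : x ≠ 1 := fun h => hfx1 (elimLin _ _ _ _ _ _ x hxq (by rw [h]; ring))
        have hxa0 : x ≠ a 0 := fun h => hfxa0 (elimLin _ _ _ _ _ _ x hxq (by rw [h]; ring))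
        have hza1 : a 1 * x ≠ 1 := fun h => hfza1 (elimLin _ _ _ _ _ _ x hxq (by rw [h]; ring))
        have hzy : a 1 * x ≠ a 0 := fun h => hfzy (elimLin _ _ _ _ _ _ x hxq (by rw [h]; ring))
        have hD : (a 3 * x + (a 0 - 1 - a 3 * a 0)) ≠ 0 := hDne x hxq
        have hN' : ((a 0 - 1 + a 3) * x - a 3 * a 0) ≠ 0 := by
          intro h
          exact hfN (elimLin _ _ _ _ _ _ x hxq (by linear_combination h))
        set u : ℂ := ((a 0 - 1 + a 3) * x - a 3 * a 0) / (a 3 * x + (a 0 - 1 - a 3 * a 0)) with hu_def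
        have hu0 : u ≠ 0 := div_ne_zero hN' hD
        have huD : u * (a 3 * x + (a 0 - 1 - a 3 * a 0)) = ((a 0 - 1 + a 3) * x - a 3 * a 0) := div_mul_cancel₀ _ hD
        have hu1 : u ≠ 1 := by
          intro h
          rw [h] at huD
          have h2 : (a 0 - 1) * (x - 1) = 0 := by linear_combination -huD
          rcases mul_eq_zero.mp h2 with h' | h'
          · exact ha01 (by linear_combination h')
          · exact hx1 (by linear_combination h')
        have hux : u ≠ x := by
          intro h
          rw [h] at huD
          have h2 : -(a 3) * ((x - 1) * (x - a 0)) = 0 := by linear_combination -huD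
          rcases mul_eq_zero.mp h2 with h' | h'
          · exact ha30 (by linear_combination -h')
          · rcases mul_eq_zero.mp h' with h'' | h''
            · exact hx1 (by linear_combination h'')
            · exact hxa0 (by linear_combination h'')
        have hua0 : u ≠ a 0 := by
          intro h
          rw [h] at huD
          have h2 : (a 0 - 1) * ((1 - a 3) * (x - a 0)) = 0 := by linear_combination -huD
          rcases mul_eq_zero.mp h2 with h' | h'
          · exact ha01 (by linear_combination h')
          · rcases mul_eq_zero.mp h' with h'' | h''
            · exact ha31 (by linear_combination -h'')
            · exact hxa0 (by linear_combination h'')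
        have huz : u ≠ a 1 * x := by
          intro h
          refine hfuz (elimQuad _ _ _ _ _ _ _ x hxq ?_)
          linear_combination -huD + (a 3 * x + (a 0 - 1 - a 3 * a 0)) * h
        have hv0 : a 2 * u ≠ 0 := mul_ne_zero ha20 hu0
        have hv1 : a 2 * u ≠ 1 := by
          intro h
          have h1 : a 2 * ((a 0 - 1 + a 3) * x - a 3 * a 0) - (a 3 * x + (a 0 - 1 - a 3 * a 0)) = 0 := by
            linear_combination (-(a 2)) * huD + (a 3 * x + (a 0 - 1 - a 3 * a 0)) * h
          have h2 : (a 1 * x - 1) * ((a 3 * x + (a 0 - 1 - a 3 * a 0)) * (1 - x)) = 0 := by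
            linear_combination hx' - ((a 1 * x - 1) - a 4 * x * (a 1 - 1)) * h1
          rcases mul_eq_zero.mp h2 with h' | h'
          · exact hza1 (by linear_combination h')
          · rcases mul_eq_zero.mp h' with h'' | h''
            · exact hD h''
            · exact hx1 (by linear_combination -h'')
        have hvx : a 2 * u ≠ x := by
          intro h
          have h1 : a 2 * ((a 0 - 1 + a 3) * x - a 3 * a 0) - x * (a 3 * x + (a 0 - 1 - a 3 * a 0)) = 0 := by
            linear_combination (-(a 2)) * huD + (a 3 * x + (a 0 - 1 - a 3 * a 0)) * h
          have h2 : a 4 * x * (a 1 - 1) * (a 2 * ((a 0 - 1 + a 3) * x - a 3 * a 0) - (a 3 * x + (a 0 - 1 - a 3 * a 0))) = 0 := by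
            linear_combination -hx' + (a 1 * x - 1) * h1
          rcases mul_eq_zero.mp h2 with h' | h'
          · rcases mul_eq_zero.mp h' with h'' | h''
            · rcases mul_eq_zero.mp h'' with h3 | h3
              · exact ha40 h3
              · exact hx0 h3
            · exact ha11 (by linear_combination h'')
          · have h4 : (a 3 * x + (a 0 - 1 - a 3 * a 0)) * (1 - x) = 0 := by linear_combination h1 - h'
            rcases mul_eq_zero.mp h4 with h'' | h''
            · exact hD h''
            · exact hx1 (by linear_combination -h'')
        have hva0 : a 2 * u ≠ a 0 := by
          intro h
          refine hfvy (elimLin _ _ _ _ _ _ x hxq ?_)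
          linear_combination (-(a 2)) * huD + (a 3 * x + (a 0 - 1 - a 3 * a 0)) * h
        have hvz : a 2 * u ≠ a 1 * x := by
          intro h
          refine hfvz (elimQuad _ _ _ _ _ _ _ x hxq ?_)
          linear_combination (-(a 2)) * huD + (a 3 * x + (a 0 - 1 - a 3 * a 0)) * h
        have hvu : u ≠ a 2 * u := by
          intro h
          have h2 : u * (a 2 - 1) = 0 := by linear_combination -h
          rcases mul_eq_zero.mp h2 with h' | h'
          · exact hu0 h'
          · exact ha21 (by linear_combination h')
        have hzx : a 1 * x ≠ x := by
          intro h
          have h2 : x * (a 1 - 1) = 0 := by linear_combination h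
          rcases mul_eq_zero.mp h2 with h' | h'
          · exact hx0 h'
          · exact ha11 (by linear_combination h')
        have hz0 : a 1 * x ≠ 0 := mul_ne_zero ha10 hx0
        refine ⟨?_, rfl, rfl, rfl, ?_, ?_, ?_, ?_, ?_⟩
        · exact inj8 0 1 x (a 0) (a 1 * x) u (a 2 * u)
            (by norm_num) (Ne.symm hx0) (Ne.symm ha00) (Ne.symm hz0) (Ne.symm hu0)
            (Ne.symm hv0) (Ne.symm hx1) (Ne.symm ha01) (Ne.symm hza1) (Ne.symm hu1)
            (Ne.symm hv1) hxa0 (Ne.symm hzx) (Ne.symm hux) (Ne.symm hvx) (Ne.symm hzy)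
            (Ne.symm hua0) (Ne.symm hva0) (Ne.symm huz) (Ne.symm hvz) hvu
        · show CR ∞ ((0:ℂ) : OnePoint ℂ) ((1:ℂ) : OnePoint ℂ) ((a 0 : ℂ) : OnePoint ℂ) = a 0
          rw [CR_inf]
          norm_num
        · show CR ∞ ((0:ℂ) : OnePoint ℂ) ((x : ℂ) : OnePoint ℂ) ((a 1 * x : ℂ) : OnePoint ℂ) = a 1
          rw [CR_inf, div_eq_iff (by simpa using hx0)]
          ring
        · show CR ∞ ((0:ℂ) : OnePoint ℂ) ((u : ℂ) : OnePoint ℂ) ((a 2 * u : ℂ) : OnePoint ℂ) = a 2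
          rw [CR_inf, div_eq_iff (by simpa using hu0)]
          ring
        · show CR ((1:ℂ) : OnePoint ℂ) ((x : ℂ) : OnePoint ℂ) ((a 0 : ℂ) : OnePoint ℂ)
            ((u : ℂ) : OnePoint ℂ) = a 3
          rw [CR_fin, div_eq_iff (mul_ne_zero (sub_ne_zero.mpr (Ne.symm hxa0))
            (sub_ne_zero.mpr hu1))]
          linear_combination huD
        · show CR ((1:ℂ) : OnePoint ℂ) ((x : ℂ) : OnePoint ℂ) ((a 1 * x : ℂ) : OnePoint ℂ)
            ((a 2 * u : ℂ) : OnePoint ℂ) = a 4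
          rw [CR_fin, div_eq_iff (mul_ne_zero (sub_ne_zero.mpr hzx) (sub_ne_zero.mpr hv1))]
          have hE : (a 3 * x + (a 0 - 1 - a 3 * a 0)) * ((a 1 * x - 1) * (a 2 * u - x)
              - a 4 * ((a 1 * x - x) * (a 2 * u - 1))) = 0 := by
            linear_combination hx' + a 2 * ((a 1 * x - 1) - a 4 * x * (a 1 - 1)) * huD
          rcases mul_eq_zero.mp hE with h' | h'
          · exact absurd h' hD
          · linear_combination h'
    intro S
    rw [show S = F '' ↑s from hSeq]
    have hinjOn : Set.InjOn F ↑s := by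
      intro x1 _ x2 _ hh
      have h3 : (x1 : OnePoint ℂ) = (x2 : OnePoint ℂ) := congrFun hh 3
      exact OnePoint.coe_eq_coe.mp h3
    constructor
    · exact (s.finite_toSet).image F
    · rw [Set.ncard_image_of_injOn hinjOn, Set.ncard_coe_finset, hscard]
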